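/- Let C ⊆ ℓ¹ consist of sequences (x₁, x₂, y₁, y₂, …) with yᵢ ≥ 0 for all i, x₁ ≥ Σᵢ yᵢ, and x₂ ≥ Σᵢ yᵢ, and let B = {v ∈ C : x₁ + x₂ = 1}. Then B is convex, its extreme points are f₁ = (1,0,0,…), f₂ = (0,1,0,…), and eᵢ = (1/2, 1/2, 0,…,0, 1/2, 0,…) (with 1/2 in position i+2), and in the weak-* topology from c₀ the set of extreme points of B is not closed: eᵢ → (1/2)f₁ + (1/2)f₂, which is not an extreme point. -/

import Mathlib

/-- The base `B = {(x₁, x₂, y) : yᵢ ≥ 0, Σyᵢ ≤ x₁, Σyᵢ ≤ x₂, x₁ + x₂ = 1}` of the cone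
`C ⊆ ℓ¹`. -/
def B17 : Set (ℝ × ℝ × (ℕ → ℝ)) :=
  {p | (∀ i, 0 ≤ p.2.2 i) ∧ (∀ s : Finset ℕ, ∑ i ∈ s, p.2.2 i ≤ p.1) ∧
    (∀ s : Finset ℕ, ∑ i ∈ s, p.2.2 i ≤ p.2.1) ∧ p.1 + p.2.1 = 1}

lemma prodEq17 {p q : ℝ × ℝ × (ℕ → ℝ)} (h1 : p.1 = q.1) (h2 : p.2.1 = q.2.1)
    (h3 : ∀ j, p.2.2 j = q.2.2 j) : p = q := by
  obtain ⟨a, b, y⟩ := p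
  obtain ⟨a', b', y'⟩ := q
  simp only [Prod.mk.injEq] at *
  exact ⟨h1, h2, funext h3⟩

lemma mk_mem_B17 {a b : ℝ} {y : ℕ → ℝ} (h1 : ∀ i, 0 ≤ y i)
    (h2 : ∀ s : Finset ℕ, ∑ i ∈ s, y i ≤ a) (h3 : ∀ s : Finset ℕ, ∑ i ∈ s, y i ≤ b)
    (h4 : a + b = 1) : ((a, b, y) : ℝ × ℝ × (ℕ → ℝ)) ∈ B17 := ⟨h1, h2, h3, h4⟩

lemma f1_mem17 : ((1:ℝ), (0:ℝ), (0:ℕ→ℝ)) ∈ B17 := by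
  refine mk_mem_B17 (fun i => le_refl 0) (fun s => ?_) (fun s => ?_) (by norm_num) <;> simp

lemma f2_mem17 : ((0:ℝ), (1:ℝ), (0:ℕ→ℝ)) ∈ B17 := by
  refine mk_mem_B17 (fun i => le_refl 0) (fun s => ?_) (fun s => ?_) (by norm_num) <;> simp

lemma e_mem17 (i : ℕ) : ((1/2:ℝ), (1/2:ℝ), Pi.single i (1/2:ℝ)) ∈ B17 := by
  refine mk_mem_B17 (fun j => ?_) (fun s => ?_) (fun s => ?_) (by norm_num)
  · simp only [Pi.single_apply]; split <;> norm_num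
  · rw [Finset.sum_pi_single']; split <;> norm_num
  · rw [Finset.sum_pi_single']; split <;> norm_num

lemma mid17 (a₁ b₁ a₂ b₂ a b : ℝ) (y₁ y₂ y : ℕ → ℝ) (h1 : a₁ + a₂ = 2*a) (h2 : b₁ + b₂ = 2*b)
    (h3 : ∀ j, y₁ j + y₂ j = 2 * y j) :
    (1/2:ℝ) • ((a₁, b₁, y₁) : ℝ × ℝ × (ℕ → ℝ)) + (1/2:ℝ) • (a₂, b₂, y₂) = (a, b, y) := by
  simp only [Prod.smul_mk, Prod.mk_add_mk, Prod.mk.injEq, smul_eq_mul]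
  refine ⟨by linarith, by linarith, funext fun j => ?_⟩
  have := h3 j
  simp only [Pi.add_apply, Pi.smul_apply, smul_eq_mul]
  linarith

lemma convexB17 : Convex ℝ B17 := by
  intro p hp q hq c d hc hd hcd
  obtain ⟨hp1, hp2, hp3, hp4⟩ := hp
  obtain ⟨hq1, hq2, hq3, hq4⟩ := hq
  refine ⟨fun j => ?_, fun s => ?_, fun s => ?_, ?_⟩
  · have h1 := hp1 j; have h2 := hq1 j
    show 0 ≤ c * p.2.2 j + d * q.2.2 j
    nlinarith
  · show ∑ j ∈ s, (c * p.2.2 j + d * q.2.2 j) ≤ c * p.1 + d * q.1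
    rw [Finset.sum_add_distrib, ← Finset.mul_sum, ← Finset.mul_sum]
    have h1 := hp2 s; have h2 := hq2 s
    nlinarith
  · show ∑ j ∈ s, (c * p.2.2 j + d * q.2.2 j) ≤ c * p.2.1 + d * q.2.1
    rw [Finset.sum_add_distrib, ← Finset.mul_sum, ← Finset.mul_sum]
    have h1 := hp3 s; have h2 := hq3 s
    nlinarith
  · show c * p.1 + d * q.1 + (c * p.2.1 + d * q.2.1) = 1
    linear_combination c * hp4 + d * hq4 + hcd

lemma f1_extreme17 : ((1:ℝ), (0:ℝ), (0:ℕ→ℝ)) ∈ Set.extremePoints ℝ B17 := by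
  rw [mem_extremePoints]
  refine ⟨f1_mem17, ?_⟩
  rintro ⟨a₁, b₁, y₁⟩ ⟨h1y, h1a, h1b, h1s⟩ ⟨a₂, b₂, y₂⟩ ⟨h2y, h2a, h2b, h2s⟩ ⟨c, d, hc, hd, hcd, heq⟩
  dsimp only at h1y h1a h1b h1s h2y h2a h2b h2s
  simp only [Prod.smul_mk, Prod.mk_add_mk, Prod.mk.injEq, smul_eq_mul] at heq
  obtain ⟨e1, e2, e3⟩ := heq
  have e3j : ∀ j, c * y₁ j + d * y₂ j = 0 := fun j => by
    have := congrFun e3 j; simpa using this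
  have hb10 : 0 ≤ b₁ := by simpa using h1b ∅
  have hb20 : 0 ≤ b₂ := by simpa using h2b ∅
  have hb1 : b₁ = 0 := by nlinarith
  have hb2 : b₂ = 0 := by nlinarith
  have hy1 : ∀ j, y₁ j = 0 := fun j => by
    have h1 := h1y j; have h2 := h2y j; have h3 := e3j j; nlinarith
  have hy2 : ∀ j, y₂ j = 0 := fun j => by
    have h1 := h1y j; have h2 := h2y j; have h3 := e3j j; nlinarith
  constructor
  · exact prodEq17 (by simpa [hb1] using h1s) hb1 hy1
  · exact prodEq17 (by simpa [hb2] using h2s) hb2 hy2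

lemma f2_extreme17 : ((0:ℝ), (1:ℝ), (0:ℕ→ℝ)) ∈ Set.extremePoints ℝ B17 := by
  rw [mem_extremePoints]
  refine ⟨f2_mem17, ?_⟩
  rintro ⟨a₁, b₁, y₁⟩ ⟨h1y, h1a, h1b, h1s⟩ ⟨a₂, b₂, y₂⟩ ⟨h2y, h2a, h2b, h2s⟩ ⟨c, d, hc, hd, hcd, heq⟩
  dsimp only at h1y h1a h1b h1s h2y h2a h2b h2s
  simp only [Prod.smul_mk, Prod.mk_add_mk, Prod.mk.injEq, smul_eq_mul] at heq
  obtain ⟨e1, e2, e3⟩ := heq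
  have e3j : ∀ j, c * y₁ j + d * y₂ j = 0 := fun j => by
    have := congrFun e3 j; simpa using this
  have ha10 : 0 ≤ a₁ := by simpa using h1a ∅
  have ha20 : 0 ≤ a₂ := by simpa using h2a ∅
  have ha1 : a₁ = 0 := by nlinarith
  have ha2 : a₂ = 0 := by nlinarith
  have hy1 : ∀ j, y₁ j = 0 := fun j => by
    have h1 := h1y j; have h2 := h2y j; have h3 := e3j j; nlinarith
  have hy2 : ∀ j, y₂ j = 0 := fun j => by
    have h1 := h1y j; have h2 := h2y j; have h3 := e3j j; nlinarith
  constructor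
  · exact prodEq17 ha1 (show b₁ = (1:ℝ) by linarith) hy1
  · exact prodEq17 ha2 (show b₂ = (1:ℝ) by linarith) hy2

lemma e_extreme17 (i : ℕ) :
    ((1/2:ℝ), (1/2:ℝ), Pi.single i (1/2:ℝ)) ∈ Set.extremePoints ℝ B17 := by
  rw [mem_extremePoints]
  refine ⟨e_mem17 i, ?_⟩
  rintro ⟨a₁, b₁, y₁⟩ ⟨h1y, h1a, h1b, h1s⟩ ⟨a₂, b₂, y₂⟩ ⟨h2y, h2a, h2b, h2s⟩ ⟨c, d, hc, hd, hcd, heq⟩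
  dsimp only at h1y h1a h1b h1s h2y h2a h2b h2s
  simp only [Prod.smul_mk, Prod.mk_add_mk, Prod.mk.injEq, smul_eq_mul] at heq
  obtain ⟨e1, e2, e3⟩ := heq
  have e3j : ∀ j, c * y₁ j + d * y₂ j = (Pi.single i (1/2:ℝ) : ℕ → ℝ) j := by
    intro j
    have h := congrFun e3 j
    simpa only [Pi.add_apply, Pi.smul_apply, smul_eq_mul] using h
  -- off-diagonal components vanish
  have hy1off : ∀ j, j ≠ i → y₁ j = 0 := fun j hj => by
    have h3 := e3j j
    rw [Pi.single_apply, if_neg hj] at h3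
    have h1 := h1y j; have h2 := h2y j; nlinarith
  have hy2off : ∀ j, j ≠ i → y₂ j = 0 := fun j hj => by
    have h3 := e3j j
    rw [Pi.single_apply, if_neg hj] at h3
    have h1 := h1y j; have h2 := h2y j; nlinarith
  -- the i-th components are at most 1/2
  have hy1i : y₁ i ≤ 1/2 := by
    have h1 := h1a {i}; have h2 := h1b {i}
    simp only [Finset.sum_singleton] at h1 h2
    linarith [h1s]
  have hy2i : y₂ i ≤ 1/2 := by
    have h1 := h2a {i}; have h2 := h2b {i}
    simp only [Finset.sum_singleton] at h1 h2
    linarith [h2s]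
  have hei : c * y₁ i + d * y₂ i = 1/2 := by
    have := e3j i; rwa [Pi.single_eq_same] at this
  have hy1i' : y₁ i = 1/2 := by nlinarith
  have hy2i' : y₂ i = 1/2 := by nlinarith
  have ha1 : a₁ = 1/2 := by
    have h1 := h1a {i}; have h2 := h1b {i}
    simp only [Finset.sum_singleton] at h1 h2
    linarith [h1s]
  have ha2 : a₂ = 1/2 := by
    have h1 := h2a {i}; have h2 := h2b {i}
    simp only [Finset.sum_singleton] at h1 h2
    linarith [h2s]
  constructor
  · refine prodEq17 ha1 (show b₁ = (1/2:ℝ) by linarith [h1s]) fun j => ?_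
    rcases eq_or_ne j i with rfl | hj
    · simpa [Pi.single_eq_same] using hy1i'
    · simp [Pi.single_apply, hj, hy1off j hj]
  · refine prodEq17 ha2 (show b₂ = (1/2:ℝ) by linarith [h2s]) fun j => ?_
    rcases eq_or_ne j i with rfl | hj
    · simpa [Pi.single_eq_same] using hy2i'
    · simp [Pi.single_apply, hj, hy2off j hj]

lemma extreme_subset17 :
    Set.extremePoints ℝ B17 ⊆
      insert ((1 : ℝ), (0 : ℝ), (0 : ℕ → ℝ))
        (insert ((0 : ℝ), (1 : ℝ), (0 : ℕ → ℝ))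
          {p : ℝ × ℝ × (ℕ → ℝ) |
            ∃ i : ℕ, p = ((1 / 2 : ℝ), (1 / 2 : ℝ), Pi.single i (1 / 2 : ℝ))}) := by
  rintro ⟨a, b, y⟩ hp
  rw [mem_extremePoints] at hp
  obtain ⟨⟨hy, ha, hb, hab⟩, hext⟩ := hp
  dsimp only at hy ha hb hab
  simp only [Set.mem_insert_iff, Set.mem_setOf_eq]
  have hmid : ∀ q r : ℝ × ℝ × (ℕ → ℝ), q ∈ B17 → r ∈ B17 →
      (1/2:ℝ) • q + (1/2:ℝ) • r = (a, b, y) → q = (a, b, y) := by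
    intro q r hq hr heq
    exact (hext q hq r hr ⟨1/2, 1/2, by norm_num, by norm_num, by norm_num, heq⟩).1
  have ha0 : (0:ℝ) ≤ a := by simpa using ha ∅
  have hb0 : (0:ℝ) ≤ b := by simpa using hb ∅
  by_cases hy0 : ∀ j, y j = 0
  · -- y = 0 : p lies on the segment [f₁, f₂]
    have hsum0 : ∀ s : Finset ℕ, ∑ j ∈ s, y j = 0 := fun s =>
      Finset.sum_eq_zero fun j _ => hy0 j
    rcases eq_or_lt_of_le ha0 with h0 | hapos
    · exact Or.inr (Or.inl (prodEq17 h0.symm (show b = (1:ℝ) by linarith) hy0))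
    rcases eq_or_lt_of_le hb0 with h0 | hbpos
    · exact Or.inl (prodEq17 (show a = (1:ℝ) by linarith) h0.symm hy0)
    exfalso
    set ε := min a b with hε
    have hε0 : 0 < ε := lt_min hapos hbpos
    have hq : ((a + ε, b - ε, y) : ℝ × ℝ × (ℕ → ℝ)) ∈ B17 :=
      mk_mem_B17 hy (fun s => by rw [hsum0 s]; linarith)
        (fun s => by rw [hsum0 s]; have := min_le_right a b; linarith) (by ring_nf; linarith)
    have hr : ((a - ε, b + ε, y) : ℝ × ℝ × (ℕ → ℝ)) ∈ B17 :=
      mk_mem_B17 hy (fun s => by rw [hsum0 s]; have := min_le_left a b; linarith)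
        (fun s => by rw [hsum0 s]; linarith) (by ring_nf; linarith)
    have h := hmid _ _ hq hr
      (mid17 _ _ _ _ _ _ _ _ _ (by ring) (by ring) (fun j => by ring))
    have hfst : a + ε = a := congrArg Prod.fst h
    linarith
  · push_neg at hy0
    obtain ⟨i, hi⟩ := hy0
    have hyi : 0 < y i := (hy i).lt_of_ne (Ne.symm hi)
    have hsum : Summable y := summable_of_sum_range_le hy (fun n => ha (Finset.range n))
    set T := ∑' j, y j with hT
    have hTa : T ≤ a := Summable.tsum_le_of_sum_le hsum ha
    have hTb : T ≤ b := Summable.tsum_le_of_sum_le hsum hb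
    have hsle : ∀ s : Finset ℕ, ∑ j ∈ s, y j ≤ T := fun s =>
      Summable.sum_le_tsum s (fun j _ => hy j) hsum
    have hiT : y i ≤ T := by simpa using hsle {i}
    have hT0 : 0 < T := lt_of_lt_of_le hyi hiT
    -- Step A : T = a ∨ T = b
    have hstepA : T = a ∨ T = b := by
      by_contra hcon
      push_neg at hcon
      have h1 : T < a := lt_of_le_of_ne hTa hcon.1
      have h2 : T < b := lt_of_le_of_ne hTb hcon.2
      set ε := min (a - T) (b - T) with hε
      have hε0 : 0 < ε := lt_min (by linarith) (by linarith)
      have hεa : ε ≤ a - T := min_le_left _ _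
      have hεb : ε ≤ b - T := min_le_right _ _
      have hq : ((a + ε, b - ε, y) : ℝ × ℝ × (ℕ→ℝ)) ∈ B17 :=
        mk_mem_B17 hy (fun s => by linarith [hsle s]) (fun s => by linarith [hsle s])
          (by ring_nf; linarith)
      have hr : ((a - ε, b + ε, y) : ℝ × ℝ × (ℕ→ℝ)) ∈ B17 :=
        mk_mem_B17 hy (fun s => by linarith [hsle s]) (fun s => by linarith [hsle s])
          (by ring_nf; linarith)
      have h := hmid _ _ hq hr
        (mid17 _ _ _ _ _ _ _ _ _ (by ring) (by ring) (fun j => by ring))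
      have hfst : a + ε = a := congrArg Prod.fst h
      linarith
    -- Step B : a = b
    have hBgen : ∀ ε : ℝ, 0 < ε → ε ≤ T/2 → T + 2*ε ≤ max a b → T = min a b → False := by
      intro ε hε0 hεT hεd hTm
      have hu0 : (0:ℝ) ≤ ε / T := le_of_lt (div_pos hε0 hT0)
      have huT : (ε / T) * T = ε := div_mul_cancel₀ ε hT0.ne'
      have hu2 : ε / T ≤ 1/2 := by
        rw [div_le_iff₀ hT0]; linarith
      have hbnd1 : ∀ s : Finset ℕ, ∑ j ∈ s, (1 + ε/T) * y j ≤ T + ε := fun s => by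
        rw [← Finset.mul_sum]
        nlinarith [hsle s, mul_nonneg hu0 (sub_nonneg.mpr (hsle s))]
      have hbnd2 : ∀ s : Finset ℕ, ∑ j ∈ s, (1 - ε/T) * y j ≤ T - ε := fun s => by
        rw [← Finset.mul_sum]
        nlinarith [hsle s, mul_nonneg hu0 (sub_nonneg.mpr (hsle s))]
      have hyp : ∀ j, 0 ≤ (1 + ε/T) * y j := fun j =>
        mul_nonneg (by linarith) (hy j)
      have hym : ∀ j, 0 ≤ (1 - ε/T) * y j := fun j =>
        mul_nonneg (by linarith) (hy j)
      rcases le_total a b with hle | hle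
      · have hmeq : min a b = a := min_eq_left hle
        have hMeq : max a b = b := max_eq_right hle
        rw [hmeq] at hTm; rw [hMeq] at hεd
        have hq : ((a + ε, b - ε, (fun j => (1 + ε/T) * y j)) : ℝ × ℝ × (ℕ→ℝ)) ∈ B17 :=
          mk_mem_B17 hyp (fun s => by linarith [hbnd1 s]) (fun s => by linarith [hbnd1 s])
            (by ring_nf; linarith)
        have hr : ((a - ε, b + ε, (fun j => (1 - ε/T) * y j)) : ℝ × ℝ × (ℕ→ℝ)) ∈ B17 :=
          mk_mem_B17 hym (fun s => by linarith [hbnd2 s]) (fun s => by linarith [hbnd2 s])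
            (by ring_nf; linarith)
        have h := hmid _ _ hq hr
          (mid17 _ _ _ _ _ _ _ _ _ (by ring) (by ring) (fun j => by ring))
        have hfst : a + ε = a := congrArg Prod.fst h
        linarith
      · have hmeq : min a b = b := min_eq_right hle
        have hMeq : max a b = a := max_eq_left hle
        rw [hmeq] at hTm; rw [hMeq] at hεd
        have hq : ((a - ε, b + ε, (fun j => (1 + ε/T) * y j)) : ℝ × ℝ × (ℕ→ℝ)) ∈ B17 :=
          mk_mem_B17 hyp (fun s => by linarith [hbnd1 s]) (fun s => by linarith [hbnd1 s])
            (by ring_nf; linarith)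
        have hr : ((a + ε, b - ε, (fun j => (1 - ε/T) * y j)) : ℝ × ℝ × (ℕ→ℝ)) ∈ B17 :=
          mk_mem_B17 hym (fun s => by linarith [hbnd2 s]) (fun s => by linarith [hbnd2 s])
            (by ring_nf; linarith)
        have h := hmid _ _ hq hr
          (mid17 _ _ _ _ _ _ _ _ _ (by ring) (by ring) (fun j => by ring))
        have hfst : a - ε = a := congrArg Prod.fst h
        linarith
    have habeq : a = b := by
      by_contra hne
      rcases lt_or_gt_of_ne hne with hlt | hgt
      · have hTeq : T = a := by
          rcases hstepA with h' | h'
          · exact h'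
          · exfalso; rw [h'] at hTa; linarith
        set ε := min (T/2) ((b - a)/2) with hεdef
        have hε0 : 0 < ε := lt_min (by linarith) (by linarith)
        refine hBgen ε hε0 (min_le_left _ _) ?_ ?_
        · rw [max_eq_right hlt.le]
          have := min_le_right (T/2) ((b - a)/2)
          linarith
        · rw [min_eq_left hlt.le]; exact hTeq
      · have hTeq : T = b := by
          rcases hstepA with h' | h'
          · exfalso; rw [h'] at hTb; linarith
          · exact h'
        set ε := min (T/2) ((a - b)/2) with hεdef
        have hε0 : 0 < ε := lt_min (by linarith) (by linarith)
        refine hBgen ε hε0 (min_le_left _ _) ?_ ?_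
        · rw [max_eq_left hgt.le]
          have := min_le_right (T/2) ((a - b)/2)
          linarith
        · rw [min_eq_right hgt.le]; exact hTeq
    have ha2 : a = 1/2 := by linarith
    have hb2 : b = 1/2 := by linarith
    have hT2 : T = 1/2 := by rcases hstepA with h' | h' <;> linarith
    -- Step C : the support of y is exactly {i}
    have hoff : ∀ j, j ≠ i → y j = 0 := by
      intro j hj
      by_contra hyj0
      have hyj : 0 < y j := (hy j).lt_of_ne (Ne.symm hyj0)
      set c := min (y i) (y j) with hcdef
      have hc0 : 0 < c := lt_min hyi hyj
      have hci : c ≤ y i := min_le_left _ _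
      have hcj : c ≤ y j := min_le_right _ _
      have bound : ∀ u v : ℕ, c ≤ y v → ∀ s : Finset ℕ,
          (∑ k ∈ s, y k) + ((if u ∈ s then c else 0) - (if v ∈ s then c else 0)) ≤ T := by
        intro u v hcv s
        by_cases hv : v ∈ s
        · rw [if_pos hv]
          split_ifs <;> linarith [hsle s]
        · rw [if_neg hv]
          have h' := hsle (insert v s)
          rw [Finset.sum_insert hv] at h'
          split_ifs <;> linarith
      have hsum_eq : ∀ (u v : ℕ) (s : Finset ℕ),
          ∑ k ∈ s, (y k + ((Pi.single u c : ℕ → ℝ) k - (Pi.single v c : ℕ → ℝ) k))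
            = (∑ k ∈ s, y k) + ((if u ∈ s then c else 0) - (if v ∈ s then c else 0)) := by
        intro u v s
        rw [Finset.sum_add_distrib, Finset.sum_sub_distrib, Finset.sum_pi_single',
          Finset.sum_pi_single']
      have hq : ((a, b, fun k => y k + ((Pi.single i c : ℕ → ℝ) k - (Pi.single j c : ℕ → ℝ) k))
          : ℝ × ℝ × (ℕ → ℝ)) ∈ B17 := by
        refine mk_mem_B17 (fun k => ?_) (fun s => ?_) (fun s => ?_) hab
        · rcases eq_or_ne k i with rfl | hki
          · rw [Pi.single_eq_same, Pi.single_eq_of_ne (Ne.symm hj)]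
            linarith [hy k]
          · rw [Pi.single_eq_of_ne hki]
            rcases eq_or_ne k j with rfl | hkj
            · rw [Pi.single_eq_same]; linarith
            · rw [Pi.single_eq_of_ne hkj]; simpa using hy k
        · rw [hsum_eq]
          have := bound i j hcj s
          linarith
        · rw [hsum_eq]
          have := bound i j hcj s
          linarith
      have hr : ((a, b, fun k => y k + ((Pi.single j c : ℕ → ℝ) k - (Pi.single i c : ℕ → ℝ) k))
          : ℝ × ℝ × (ℕ → ℝ)) ∈ B17 := by
        refine mk_mem_B17 (fun k => ?_) (fun s => ?_) (fun s => ?_) hab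
        · rcases eq_or_ne k j with rfl | hkj
          · rw [Pi.single_eq_same, Pi.single_eq_of_ne hj]
            linarith [hy k]
          · rw [Pi.single_eq_of_ne hkj]
            rcases eq_or_ne k i with rfl | hki
            · rw [Pi.single_eq_same]; linarith
            · rw [Pi.single_eq_of_ne hki]; simpa using hy k
        · rw [hsum_eq]
          have := bound j i hci s
          linarith
        · rw [hsum_eq]
          have := bound j i hci s
          linarith
      have h := hmid _ _ hq hr
        (mid17 _ _ _ _ _ _ _ _ _ (by ring) (by ring) (fun k => by ring))
      have h2 : (fun k => y k + ((Pi.single i c : ℕ → ℝ) k - (Pi.single j c : ℕ → ℝ) k)) i = y i :=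
        congrFun (congrArg (fun t => t.2.2) h) i
      have h3 : y i + ((Pi.single i c : ℕ → ℝ) i - (Pi.single j c : ℕ → ℝ) i) = y i := h2
      rw [Pi.single_eq_same, Pi.single_eq_of_ne (Ne.symm hj)] at h3
      linarith
    have hTyi : T = y i := by
      rw [hT]
      exact tsum_eq_single i fun b' hb' => hoff b' hb'
    refine Or.inr (Or.inr ⟨i, prodEq17 ha2 hb2 fun k => ?_⟩)
    show y k = (Pi.single i (1/2 : ℝ) : ℕ → ℝ) k
    rcases eq_or_ne k i with rfl | hk
    · rw [Pi.single_eq_same]; linarith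
    · rw [Pi.single_eq_of_ne hk]; exact hoff k hk

theorem stmt17 :
    Convex ℝ B17 ∧
    Set.extremePoints ℝ B17 =
      insert ((1 : ℝ), (0 : ℝ), (0 : ℕ → ℝ))
        (insert ((0 : ℝ), (1 : ℝ), (0 : ℕ → ℝ))
          {p : ℝ × ℝ × (ℕ → ℝ) |
            ∃ i : ℕ, p = ((1 / 2 : ℝ), (1 / 2 : ℝ), Pi.single i (1 / 2 : ℝ))}) ∧
    Filter.Tendsto
      (fun i : ℕ => (((1 / 2 : ℝ), (1 / 2 : ℝ), Pi.single i (1 / 2 : ℝ)) : ℝ × ℝ × (ℕ → ℝ)))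
      Filter.atTop (nhds ((1 / 2 : ℝ), (1 / 2 : ℝ), (0 : ℕ → ℝ))) ∧
    ((1 / 2 : ℝ), (1 / 2 : ℝ), (0 : ℕ → ℝ)) ∉ Set.extremePoints ℝ B17 ∧
    ¬ IsClosed (Set.extremePoints ℝ B17) := by
  have hsetEq : Set.extremePoints ℝ B17 =
      insert ((1 : ℝ), (0 : ℝ), (0 : ℕ → ℝ))
        (insert ((0 : ℝ), (1 : ℝ), (0 : ℕ → ℝ))
          {p : ℝ × ℝ × (ℕ → ℝ) |
            ∃ i : ℕ, p = ((1 / 2 : ℝ), (1 / 2 : ℝ), Pi.single i (1 / 2 : ℝ))}) := by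
    apply Set.Subset.antisymm extreme_subset17
    intro p hp
    simp only [Set.mem_insert_iff, Set.mem_setOf_eq] at hp
    rcases hp with rfl | rfl | ⟨i, rfl⟩
    · exact f1_extreme17
    · exact f2_extreme17
    · exact e_extreme17 i
  have htend : Filter.Tendsto
      (fun i : ℕ => (((1 / 2 : ℝ), (1 / 2 : ℝ), Pi.single i (1 / 2 : ℝ)) : ℝ × ℝ × (ℕ → ℝ)))
      Filter.atTop (nhds ((1 / 2 : ℝ), (1 / 2 : ℝ), (0 : ℕ → ℝ))) := by
    refine Filter.Tendsto.prodMk_nhds tendsto_const_nhds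
      (Filter.Tendsto.prodMk_nhds tendsto_const_nhds ?_)
    rw [tendsto_pi_nhds]
    intro j
    have hev : (fun k : ℕ => (Pi.single k (1/2:ℝ) : ℕ → ℝ) j) =ᶠ[Filter.atTop]
        fun _ => (0:ℝ) := by
      filter_upwards [Filter.eventually_gt_atTop j] with k hk
      exact Pi.single_eq_of_ne hk.ne _
    rw [Filter.tendsto_congr' hev]
    exact tendsto_const_nhds
  have hnotext : ((1 / 2 : ℝ), (1 / 2 : ℝ), (0 : ℕ → ℝ)) ∉ Set.extremePoints ℝ B17 := by
    rw [mem_extremePoints]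
    rintro ⟨-, h⟩
    have h1 := (h _ f1_mem17 _ f2_mem17 ⟨1/2, 1/2, by norm_num, by norm_num, by norm_num,
      mid17 _ _ _ _ _ _ _ _ _ (by norm_num) (by norm_num) (fun j => by norm_num)⟩).1
    have h2 : (1:ℝ) = 1/2 := congrArg Prod.fst h1
    norm_num at h2
  refine ⟨convexB17, hsetEq, htend, hnotext, fun hcl => ?_⟩
  exact hnotext (hcl.mem_of_tendsto htend
    (Filter.Eventually.of_forall fun i => e_extreme17 i))
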